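/- Let W = I + (√(1−γ) − 1) e_i e_iᵀ with γ ∈ (0,1) and μ_i(M) < 1. Then for each j ≠ i, the j-th leverage score of WM equals μ_j(M) + γ μ_{ij}(M)² / (1 − γ μ_i(M)), which is at least μ_j(M). -/

import Mathlib

open Matrix

lemma matrix_ext_mulVec {n m : ℕ} (X Y : Matrix (Fin n) (Fin m) ℝ)
    (h : ∀ v, X *ᵥ v = Y *ᵥ v) : X = Y := by
  ext a b
  have := congrFun (h (Pi.single b 1)) a
  simpa [Matrix.mulVec_single] using this

lemma range_mul_le {n m p : ℕ} (X : Matrix (Fin n) (Fin m) ℝ) (Y : Matrix (Fin m) (Fin p) ℝ) :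
    LinearMap.range (X * Y).mulVecLin ≤ LinearMap.range X.mulVecLin := by
  rw [Matrix.mulVecLin_mul]
  exact LinearMap.range_comp_le_range _ _

lemma idem_absorb {n : ℕ} (A B : Matrix (Fin n) (Fin n) ℝ) (hA : A * A = A)
    (hle : LinearMap.range B.mulVecLin ≤ LinearMap.range A.mulVecLin) : A * B = B := by
  apply matrix_ext_mulVec
  intro v
  obtain ⟨w, hw⟩ := hle ⟨v, rfl⟩
  simp only [Matrix.mulVecLin_apply] at hw
  rw [← Matrix.mulVec_mulVec, ← hw, Matrix.mulVec_mulVec, hA]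

lemma proj_unique {n : ℕ} (P Q : Matrix (Fin n) (Fin n) ℝ)
    (hPt : Pᵀ = P) (hQt : Qᵀ = Q) (hP2 : P * P = P) (hQ2 : Q * Q = Q)
    (hr : LinearMap.range P.mulVecLin = LinearMap.range Q.mulVecLin) : P = Q := by
  have h1 : P * Q = Q := idem_absorb P Q hP2 hr.ge
  have h2 : Q * P = P := idem_absorb Q P hQ2 hr.le
  calc P = Pᵀ := hPt.symm
    _ = (Q * P)ᵀ := by rw [h2]
    _ = Pᵀ * Qᵀ := by rw [Matrix.transpose_mul]
    _ = P * Q := by rw [hPt, hQt]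
    _ = Q := h1

lemma range_gram {n k : ℕ} (U : Matrix (Fin n) (Fin k) ℝ) (hU : Uᵀ * U = 1) :
    LinearMap.range (U * Uᵀ).mulVecLin = LinearMap.range U.mulVecLin := by
  refine le_antisymm (range_mul_le _ _) ?_
  have h : U = (U * Uᵀ) * U := by rw [Matrix.mul_assoc, hU, Matrix.mul_one]
  conv_lhs => rw [h]
  exact range_mul_le _ _

lemma EPE {n₁ : ℕ} (i : Fin n₁) (P : Matrix (Fin n₁) (Fin n₁) ℝ) :
    single i i (1:ℝ) * P * single i i (1:ℝ) = P i i • single i i (1:ℝ) := by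
  ext a b
  by_cases ha : a = i
  · by_cases hb : b = i
    · rw [ha, hb]; simp
    · simp [Matrix.mul_single_apply_of_ne _ _ _ _ _ hb,
        Matrix.single_apply_of_ne _ _ _ _ _ (fun h => hb h.2.symm)]
  · simp [Matrix.mul_assoc, Matrix.single_mul_apply_of_ne _ _ _ _ _ ha,
      Matrix.single_apply_of_ne _ _ _ _ _ (fun h => ha h.1.symm)]

lemma comb_lemma {n : ℕ} (A : Matrix (Fin n) (Fin n) ℝ) (μ : ℝ) (hA : A * A = μ • A)
    (a b : ℝ) : (1 + a • A) * (1 + b • A) = 1 + (a + b + a * b * μ) • A := by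
  simp only [Matrix.mul_add, Matrix.add_mul, Matrix.one_mul, Matrix.mul_one,
    smul_mul_assoc, Matrix.mul_smul, hA]
  module

lemma transpose_E {n : ℕ} (i : Fin n) :
    (single i i (1:ℝ))ᵀ = single i i (1:ℝ) := by
  ext a b
  simp [Matrix.single, and_comm]

/-- Rank-one row weighting: scaling row `i` of `M` by `√(1-γ)` changes the `j`-th
(`j ≠ i`) leverage score to `μ_j + γ μ_{ij}² / (1 - γ μ_i)`, which is at least `μ_j`. -/
theorem leverage_after_row_weighting_other (n₁ n₂ k k' : ℕ)
    (M : Matrix (Fin n₁) (Fin n₂) ℝ) (γ : ℝ) (i j : Fin n₁) (hij : j ≠ i)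
    (hγ0 : 0 < γ) (hγ1 : γ < 1)
    (U : Matrix (Fin n₁) (Fin k) ℝ) (U' : Matrix (Fin n₁) (Fin k') ℝ)
    (hU : Uᵀ * U = 1)
    (hspan : LinearMap.range U.mulVecLin = LinearMap.range M.mulVecLin)
    (hμ : (U * Uᵀ) i i < 1)
    (W : Matrix (Fin n₁) (Fin n₁) ℝ)
    (hW : W = 1 + (Real.sqrt (1 - γ) - 1) • single i i (1 : ℝ))
    (hU' : U'ᵀ * U' = 1)
    (hspan' : LinearMap.range U'.mulVecLin = LinearMap.range (W * M).mulVecLin) :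
    (U' * U'ᵀ) j j
        = (U * Uᵀ) j j + γ * ((U * Uᵀ) i j) ^ 2 / (1 - γ * (U * Uᵀ) i i) ∧
      (U * Uᵀ) j j ≤ (U' * U'ᵀ) j j := by
  set E : Matrix (Fin n₁) (Fin n₁) ℝ := single i i (1:ℝ) with hE
  set s : ℝ := Real.sqrt (1 - γ) - 1 with hs
  set μ : ℝ := (U * Uᵀ) i i with hμdef
  have hγle : (0:ℝ) ≤ 1 - γ := by linarith
  have hsq : (1 + s) * (1 + s) = 1 - γ := by
    rw [hs]; ring_nf
    nlinarith [Real.sq_sqrt hγle]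
  have hd : (0:ℝ) < 1 - γ * μ := by nlinarith
  set c : ℝ := γ / (1 - γ * μ) with hc
  set A : Matrix (Fin k) (Fin k) ℝ := Uᵀ * E * U with hA
  set B : Matrix (Fin k) (Fin k) ℝ := 1 + c • A with hB
  set B' : Matrix (Fin k) (Fin k) ℝ := 1 + (-γ) • A with hB'
  set Q : Matrix (Fin n₁) (Fin n₁) ℝ := W * U * B * Uᵀ * W with hQ
  -- basic facts
  have hE2 : E * E = E := by rw [hE]; simp
  have hEt : Eᵀ = E := transpose_E i
  have hA2 : A * A = μ • A := by
    calc A * A = Uᵀ * (E * (U * Uᵀ) * E) * U := by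
          rw [hA]; simp only [Matrix.mul_assoc]
      _ = Uᵀ * (μ • E) * U := by rw [EPE i (U * Uᵀ)]
      _ = μ • A := by rw [hA]; simp [Matrix.mul_smul, Matrix.smul_mul]
  have hAt : Aᵀ = A := by
    rw [hA]; simp [Matrix.transpose_mul, hEt, Matrix.mul_assoc]
  have hWt : Wᵀ = W := by rw [hW]; simp [Matrix.transpose_add, Matrix.transpose_smul, hEt]
  have hcombE := comb_lemma E 1 (by rw [hE2]; simp)
  have hW2 : W * W = 1 + (-γ) • E := by
    rw [hW, hcombE s s]
    congr 1
    congr 1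
    nlinarith [hsq]
  -- W inverse
  set t : ℝ := (Real.sqrt (1 - γ))⁻¹ - 1 with ht
  set Winv : Matrix (Fin n₁) (Fin n₁) ℝ := 1 + t • E with hWinvdef
  have hsqrt_pos : (0:ℝ) < Real.sqrt (1 - γ) := Real.sqrt_pos.2 (by linarith)
  have hWinv : W * Winv = 1 := by
    rw [hW, hWinvdef, hcombE s t]
    have : s + t + s * t * 1 = 0 := by
      have : (1 + s) * (1 + t) = 1 := by
        rw [hs, ht]
        field_simp
        ring
      nlinarith [this]
    rw [this]; simp
  -- UᵀW²U = B'
  have hUWWU : Uᵀ * (W * W) * U = B' := by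
    rw [hW2, hB']
    simp [Matrix.mul_add, Matrix.add_mul, Matrix.mul_smul, Matrix.smul_mul, hU, hA,
      Matrix.mul_assoc]
  have hcombA := comb_lemma A μ hA2
  have hcoef : -γ + c + -γ * c * μ = 0 := by
    rw [hc]; field_simp; ring
  have hcoef' : c + -γ + c * -γ * μ = 0 := by linarith [hcoef]; 
  have hB'B : B' * B = 1 := by
    rw [hB', hB, hcombA (-γ) c, hcoef]; simp
  have hBB' : B * B' = 1 := by
    rw [hB', hB, hcombA c (-γ), hcoef']; simp
  have hBt : Bᵀ = B := by rw [hB]; simp [Matrix.transpose_add, Matrix.transpose_smul, hAt]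
  -- Q is a symmetric idempotent
  have hQt : Qᵀ = Q := by
    rw [hQ]
    simp [Matrix.transpose_mul, Matrix.transpose_transpose, hWt, hBt, Matrix.mul_assoc]
  have hQ2 : Q * Q = Q := by
    calc Q * Q = (W * U) * (B * ((Uᵀ * (W * W) * U) * (B * (Uᵀ * W)))) := by
          rw [hQ]; simp only [Matrix.mul_assoc]
      _ = (W * U) * ((B * B') * (B * (Uᵀ * W))) := by rw [hUWWU]; simp only [Matrix.mul_assoc]
      _ = Q := by rw [hBB', hQ]; simp only [Matrix.one_mul, Matrix.mul_assoc]
  -- range Q = range (W * U)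
  have hQform : Q = (W * U) * (B * (Uᵀ * W)) := by rw [hQ]; simp only [Matrix.mul_assoc]
  have hWUform : W * U = Q * (Winv * (U * B')) := by
    symm
    calc Q * (Winv * (U * B'))
        = (W * U) * (B * ((Uᵀ * (W * Winv) * U) * B')) := by
          rw [hQ]; simp only [Matrix.mul_assoc]
      _ = (W * U) * (B * B') := by rw [hWinv, Matrix.mul_one, hU, Matrix.one_mul]
      _ = W * U := by rw [hBB', Matrix.mul_one]
  have hrangeQ : LinearMap.range Q.mulVecLin = LinearMap.range (W * U).mulVecLin := by
    refine le_antisymm ?_ ?_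
    · rw [hQform]; exact range_mul_le _ _
    · conv_lhs => rw [hWUform]
      exact range_mul_le _ _
  -- range (U' * U'ᵀ) = range Q
  have hrange : LinearMap.range (U' * U'ᵀ).mulVecLin = LinearMap.range Q.mulVecLin := by
    rw [range_gram U' hU', hspan', hrangeQ, Matrix.mulVecLin_mul, Matrix.mulVecLin_mul,
      LinearMap.range_comp, LinearMap.range_comp, hspan]
  -- conclude U' * U'ᵀ = Q
  have hproj : U' * U'ᵀ = Q := by
    refine proj_unique _ _ ?_ hQt ?_ hQ2 hrange
    · rw [Matrix.transpose_mul, Matrix.transpose_transpose]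
    · rw [Matrix.mul_assoc, ← Matrix.mul_assoc U'ᵀ U' U'ᵀ, hU', Matrix.one_mul]
  -- entrywise computation of Q j j
  have hWleft : ∀ (Y : Matrix (Fin n₁) (Fin n₁) ℝ) (b : Fin n₁), (W * Y) j b = Y j b := by
    intro Y b
    rw [hW]
    simp [hE, Matrix.add_mul, smul_mul_assoc,
      Matrix.single_mul_apply_of_ne _ i i j b hij]
  have hWright : ∀ (Y : Matrix (Fin n₁) (Fin n₁) ℝ) (a : Fin n₁), (Y * W) a j = Y a j := by
    intro Y a
    rw [hW]
    simp [hE, Matrix.mul_add, Matrix.mul_smul,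
      Matrix.mul_single_apply_of_ne _ i i a j hij]
  have hQjj1 : Q j j = (U * B * Uᵀ) j j := by
    have h1 : Q = W * (U * B * Uᵀ * W) := by rw [hQ]; simp only [Matrix.mul_assoc]
    rw [h1, hWleft, hWright]
  have hPsymm : (U * Uᵀ) j i = (U * Uᵀ) i j := by
    have := congrFun (congrFun (show (U * Uᵀ)ᵀ = U * Uᵀ by
      rw [Matrix.transpose_mul, Matrix.transpose_transpose]) i) j
    simpa [Matrix.transpose_apply] using this
  have hUAU : U * A * Uᵀ = (U * Uᵀ) * E * (U * Uᵀ) := by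
    rw [hA]; simp only [Matrix.mul_assoc]
  have hPEP : ((U * Uᵀ) * E * (U * Uᵀ)) j j = ((U * Uᵀ) i j) ^ 2 := by
    rw [hE]
    rw [Matrix.mul_apply]
    rw [Finset.sum_eq_single i]
    · rw [Matrix.mul_single_apply_same]
      rw [hPsymm]; ring
    · intro b _ hb
      rw [Matrix.mul_single_apply_of_ne _ _ _ _ _ hb]
      ring
    · intro h; exact absurd (Finset.mem_univ i) h
  have hQjj : Q j j = (U * Uᵀ) j j + c * ((U * Uᵀ) i j) ^ 2 := by
    rw [hQjj1, hB]
    have : U * (1 + c • A) * Uᵀ = U * Uᵀ + c • (U * A * Uᵀ) := by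
      simp [Matrix.mul_add, Matrix.add_mul, Matrix.mul_smul, Matrix.smul_mul, Matrix.mul_assoc]
    rw [this, hUAU]
    simp [hPEP]
  have hfinal : (U' * U'ᵀ) j j = (U * Uᵀ) j j + c * ((U * Uᵀ) i j) ^ 2 := by
    rw [hproj, hQjj]
  constructor
  · rw [hfinal, hc]; ring
  · rw [hfinal]
    have hcpos : 0 ≤ c := le_of_lt (div_pos hγ0 hd)
    nlinarith [sq_nonneg ((U * Uᵀ) i j)]
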